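/- arXiv:2504.05574 — 3 statements merged into one kernel-verified Lean document; each statement's English description precedes it below -/
import Mathlib

section
/- Let (X_k)_{k≥1} be i.i.d. nonnegative random variables, z = E[e^{iX_1}], S_n = X_1 + ⋯ + X_n, Z_n = ∑_{k=1}^n e^{iS_k}, Z_0 = 0. Define M_0 = z and M_n = Z_n − z·Z_{n−1} for n ≥ 1. Then (M_n)_{n≥0} is a complex-valued martingale with respect to the filtration F_n = σ(X_1,…,X_n) (F_0 trivial), and for every N ≥ 1 one has the convolution identity Z_N = ∑_{k=1}^N z^{N−k} M_k. -/
open MeasureTheory ProbabilityTheory Filter Complex Topology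

lemma aux_integral_mul {Ω : Type*} {mΩ : MeasurableSpace Ω} {μ : Measure Ω} {U V : Ω → ℂ}
    (h : IndepFun U V μ) (hU : Integrable U μ) (hV : Integrable V μ) :
    ∫ ω, U ω * V ω ∂μ = (∫ ω, U ω ∂μ) * ∫ ω, V ω ∂μ := by
  have hUV : Integrable (fun ω => U ω * V ω) μ := h.integrable_mul hU hV
  have hUr : Integrable (fun ω => (U ω).re) μ := by simpa using hU.re
  have hUi : Integrable (fun ω => (U ω).im) μ := by simpa using hU.im
  have hVr : Integrable (fun ω => (V ω).re) μ := by simpa using hV.re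
  have hVi : Integrable (fun ω => (V ω).im) μ := by simpa using hV.im
  have hrr : IndepFun (fun ω => (U ω).re) (fun ω => (V ω).re) μ :=
    h.comp Complex.measurable_re Complex.measurable_re
  have hri : IndepFun (fun ω => (U ω).re) (fun ω => (V ω).im) μ :=
    h.comp Complex.measurable_re Complex.measurable_im
  have hir : IndepFun (fun ω => (U ω).im) (fun ω => (V ω).re) μ :=
    h.comp Complex.measurable_im Complex.measurable_re
  have hii : IndepFun (fun ω => (U ω).im) (fun ω => (V ω).im) μ :=
    h.comp Complex.measurable_im Complex.measurable_im
  have mrr : Integrable (fun ω => (U ω).re * (V ω).re) μ := hrr.integrable_mul hUr hVr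
  have mri : Integrable (fun ω => (U ω).re * (V ω).im) μ := hri.integrable_mul hUr hVi
  have mir : Integrable (fun ω => (U ω).im * (V ω).re) μ := hir.integrable_mul hUi hVr
  have mii : Integrable (fun ω => (U ω).im * (V ω).im) μ := hii.integrable_mul hUi hVi
  have irr : ∫ ω, (U ω).re * (V ω).re ∂μ = (∫ ω, (U ω).re ∂μ) * ∫ ω, (V ω).re ∂μ :=
    hrr.integral_fun_mul_eq_mul_integral hUr.aestronglyMeasurable hVr.aestronglyMeasurable
  have iri : ∫ ω, (U ω).re * (V ω).im ∂μ = (∫ ω, (U ω).re ∂μ) * ∫ ω, (V ω).im ∂μ :=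
    hri.integral_fun_mul_eq_mul_integral hUr.aestronglyMeasurable hVi.aestronglyMeasurable
  have iir : ∫ ω, (U ω).im * (V ω).re ∂μ = (∫ ω, (U ω).im ∂μ) * ∫ ω, (V ω).re ∂μ :=
    hir.integral_fun_mul_eq_mul_integral hUi.aestronglyMeasurable hVr.aestronglyMeasurable
  have iii : ∫ ω, (U ω).im * (V ω).im ∂μ = (∫ ω, (U ω).im ∂μ) * ∫ ω, (V ω).im ∂μ :=
    hii.integral_fun_mul_eq_mul_integral hUi.aestronglyMeasurable hVi.aestronglyMeasurable
  have hAre : (∫ ω, U ω ∂μ).re = ∫ ω, (U ω).re ∂μ := by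
    simpa using (integral_re hU).symm
  have hAim : (∫ ω, U ω ∂μ).im = ∫ ω, (U ω).im ∂μ := by
    simpa using (integral_im hU).symm
  have hBre : (∫ ω, V ω ∂μ).re = ∫ ω, (V ω).re ∂μ := by
    simpa using (integral_re hV).symm
  have hBim : (∫ ω, V ω ∂μ).im = ∫ ω, (V ω).im ∂μ := by
    simpa using (integral_im hV).symm
  apply Complex.ext
  · have h1 : (∫ ω, U ω * V ω ∂μ).re = ∫ ω, (U ω * V ω).re ∂μ := by
      simpa using (integral_re hUV).symm
    rw [h1, Complex.mul_re, hAre, hAim, hBre, hBim]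
    have h2 : (fun ω => (U ω * V ω).re)
        = fun ω => (U ω).re * (V ω).re - (U ω).im * (V ω).im := by
      funext ω; exact Complex.mul_re _ _
    rw [h2, integral_sub mrr mii, irr, iii]
  · have h1 : (∫ ω, U ω * V ω ∂μ).im = ∫ ω, (U ω * V ω).im ∂μ := by
      simpa using (integral_im hUV).symm
    rw [h1, Complex.mul_im, hAre, hAim, hBre, hBim]
    have h2 : (fun ω => (U ω * V ω).im)
        = fun ω => (U ω).re * (V ω).im + (U ω).im * (V ω).re := by
      funext ω; exact Complex.mul_im _ _
    rw [h2, integral_add mri mir, iri, iir]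

/-- With `z = E e^{iX_1}`, `Z_n = ∑_{k=1}^n e^{iS_k}`, `M_0 = z`,
`M_n = Z_n - z Z_{n-1}` for `n ≥ 1`, the process `M` is a martingale for the natural
filtration `F_n = σ(X_1,…,X_n)` (`F_0` trivial), and `Z_N = ∑_{k=1}^N z^{N-k} M_k`. -/
theorem stmt4
    {Ω : Type*} [MeasureSpace Ω] [IsProbabilityMeasure (ℙ : Measure Ω)]
    (X : ℕ → Ω → ℝ)
    (hmeas : ∀ k, Measurable (X k))
    (hindep : iIndepFun (fun k => X (k + 1)) ℙ)
    (hident : ∀ k, IdentDistrib (X (k + 1)) (X 1) ℙ ℙ)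
    (hnonneg : ∀ k ω, 0 ≤ X k ω)
    (S : ℕ → Ω → ℝ)
    (hS : ∀ n ω, S n ω = ∑ k ∈ Finset.Icc 1 n, X k ω)
    (z : ℂ) (hzdef : z = ∫ ω, Complex.exp (Complex.I * (X 1 ω : ℂ)) ∂ℙ)
    (Z : ℕ → Ω → ℂ)
    (hZ : ∀ n ω, Z n ω = ∑ k ∈ Finset.Icc 1 n, Complex.exp (Complex.I * (S k ω : ℂ)))
    (M : ℕ → Ω → ℂ)
    (hM0 : ∀ ω, M 0 ω = z)
    (hM : ∀ n : ℕ, 1 ≤ n → ∀ ω, M n ω = Z n ω - z * Z (n - 1) ω)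
    (ℱ : Filtration ℕ (MeasureSpace.toMeasurableSpace (α := Ω)))
    (hℱ : ∀ n, ℱ n = ⨆ k ∈ Set.Icc 1 n, MeasurableSpace.comap (X k) inferInstance) :
    Martingale M ℱ ℙ ∧
    ∀ N : ℕ, 1 ≤ N → ∀ ω, Z N ω = ∑ k ∈ Finset.Icc 1 N, z ^ (N - k) * M k ω := by
  classical
  -- norm of e^{ix} is 1
  have hnorm1 : ∀ x : ℝ, ‖Complex.exp (Complex.I * (x : ℂ))‖ = 1 := by
    intro x
    rw [Complex.norm_exp]
    simp [Complex.mul_re]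
  -- basic structure of S and Z
  have hS0 : ∀ ω, S 0 ω = 0 := by intro ω; rw [hS]; simp
  have hZ0 : ∀ ω, Z 0 ω = 0 := by intro ω; rw [hZ]; simp
  have hSsucc : ∀ n ω, S (n + 1) ω = S n ω + X (n + 1) ω := by
    intro n ω
    rw [hS, hS, Finset.sum_Icc_succ_top (by omega : 1 ≤ n + 1)]
  have hZsucc : ∀ n ω, Z (n + 1) ω = Z n ω + Complex.exp (Complex.I * (S (n + 1) ω : ℂ)) := by
    intro n ω
    rw [hZ, hZ, Finset.sum_Icc_succ_top (by omega : 1 ≤ n + 1)]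
  have hexp_succ : ∀ n ω, Complex.exp (Complex.I * (S (n + 1) ω : ℂ))
      = Complex.exp (Complex.I * (S n ω : ℂ)) * Complex.exp (Complex.I * (X (n + 1) ω : ℂ)) := by
    intro n ω
    rw [hSsucc n ω, ← Complex.exp_add]
    push_cast
    ring_nf
  -- measurability with respect to ℱ n
  have hXF : ∀ n k, k ∈ Finset.Icc 1 n → Measurable[ℱ n] (X k) := by
    intro n k hk
    apply Measurable.of_comap_le
    rw [hℱ n]
    exact le_biSup (f := fun k => MeasurableSpace.comap (X k) inferInstance) (by simpa using hk)
  have hSF : ∀ n k, k ≤ n → Measurable[ℱ n] (S k) := by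
    intro n k hkn
    have : S k = fun ω => ∑ j ∈ Finset.Icc 1 k, X j ω := funext (hS k)
    rw [this]
    exact Finset.measurable_sum _ fun j hj => hXF n j
      (Finset.mem_Icc.mpr ⟨(Finset.mem_Icc.mp hj).1, le_trans (Finset.mem_Icc.mp hj).2 hkn⟩)
  have heSF : ∀ n k, k ≤ n →
      Measurable[ℱ n] (fun ω => Complex.exp (Complex.I * (S k ω : ℂ))) := by
    intro n k hkn
    exact Complex.measurable_exp.comp
      (measurable_const.mul (Complex.measurable_ofReal.comp (hSF n k hkn)))
  have hZF : ∀ n k, k ≤ n → Measurable[ℱ n] (Z k) := by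
    intro n k hkn
    have : Z k = fun ω => ∑ j ∈ Finset.Icc 1 k, Complex.exp (Complex.I * (S j ω : ℂ)) :=
      funext (hZ k)
    rw [this]
    exact Finset.measurable_sum _ fun j hj =>
      heSF n j (le_trans (Finset.mem_Icc.mp hj).2 hkn)
  have hMF : ∀ n, Measurable[ℱ n] (M n) := by
    intro n
    cases n with
    | zero =>
      have : M 0 = fun _ => z := funext hM0
      rw [this]; exact measurable_const
    | succ k =>
      have : M (k + 1) = fun ω => Z (k + 1) ω - z * Z k ω := by
        funext ω
        rw [hM (k + 1) (by omega) ω]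
        simp
      rw [this]
      exact ((hZF (k + 1) (k + 1) le_rfl).sub (measurable_const.mul (hZF (k + 1) k (by omega))))
  -- ambient measurability
  have hMamb : ∀ n, Measurable (M n) := fun n t ht => ℱ.le n _ (hMF n ht)
  have hZamb : ∀ n, Measurable (Z n) := fun n t ht => ℱ.le n _ (hZF n n le_rfl ht)
  have hSamb : ∀ n, Measurable (S n) := fun n t ht => ℱ.le n _ (hSF n n le_rfl ht)
  have heSamb : ∀ n, Measurable (fun ω => Complex.exp (Complex.I * (S n ω : ℂ))) :=
    fun n t ht => ℱ.le n _ (heSF n n le_rfl ht)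
  have hXc : ∀ k, Measurable (fun ω => Complex.exp (Complex.I * (X k ω : ℂ))) := by
    intro k
    exact Complex.measurable_exp.comp
      (measurable_const.mul (Complex.measurable_ofReal.comp (hmeas k)))
  -- bounded measurable functions are integrable
  have hbdd : ∀ (f : Ω → ℂ) (C : ℝ), Measurable f → (∀ ω, ‖f ω‖ ≤ C) → Integrable f ℙ := by
    intro f C hf hC
    exact (integrable_const C).mono' hf.aestronglyMeasurable (Eventually.of_forall hC)
  have hZbd : ∀ n ω, ‖Z n ω‖ ≤ n := by
    intro n ω
    rw [hZ n ω]
    calc ‖∑ k ∈ Finset.Icc 1 n, Complex.exp (Complex.I * (S k ω : ℂ))‖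
        ≤ ∑ k ∈ Finset.Icc 1 n, ‖Complex.exp (Complex.I * (S k ω : ℂ))‖ := norm_sum_le _ _
      _ = ∑ k ∈ Finset.Icc 1 n, (1 : ℝ) := by
          apply Finset.sum_congr rfl; intro k _; exact hnorm1 _
      _ = n := by simp
  have hZint : ∀ n, Integrable (Z n) ℙ := fun n => hbdd _ n (hZamb n) (hZbd n)
  have hMint : ∀ n, Integrable (M n) ℙ := by
    intro n
    cases n with
    | zero =>
      have : M 0 = fun _ => z := funext hM0
      rw [this]; exact integrable_const z
    | succ k =>
      have : M (k + 1) = fun ω => Z (k + 1) ω - z * Z k ω := by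
        funext ω; rw [hM (k + 1) (by omega) ω]; simp
      rw [this]
      exact ((hZint (k + 1)).sub ((hZint k).const_mul z))
  -- increment identity
  have hDM : ∀ n ω, M (n + 1) ω = M n ω +
      Complex.exp (Complex.I * (S n ω : ℂ)) *
        (Complex.exp (Complex.I * (X (n + 1) ω : ℂ)) - z) := by
    intro n ω
    cases n with
    | zero =>
      have e0 := hM 1 le_rfl ω
      norm_num at e0
      have e1 : Z 1 ω = Complex.exp (Complex.I * (S 1 ω : ℂ)) := by rw [hZ]; simp
      have e2 : S 1 ω = X 1 ω := by rw [hS]; simp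
      rw [e0, e1, e2, hZ0 ω, hM0 ω, hS0 ω]
      simp
    | succ k =>
      have e0 := hM (k + 2) (by omega) ω
      have e1 := hM (k + 1) (by omega) ω
      norm_num at e0 e1
      rw [e0, e1, hZsucc (k + 1) ω, hexp_succ (k + 1) ω, hZsucc k ω]
      ring
  -- the filtration as a sup over shifted indices
  have hFeq : ∀ n, ℱ n = ⨆ i ∈ Set.Iio n, MeasurableSpace.comap (X (i + 1)) inferInstance := by
    intro n
    rw [hℱ n]
    apply le_antisymm
    · refine iSup₂_le fun k hk => ?_
      have hk1 : 1 ≤ k := hk.1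
      have hkn : k - 1 ∈ Set.Iio n := by
        have := hk.2; simp only [Set.mem_Iio]; omega
      have heq : MeasurableSpace.comap (X k) inferInstance
          = MeasurableSpace.comap (X (k - 1 + 1)) inferInstance := by
        rw [Nat.sub_add_cancel hk1]
      rw [heq]
      exact le_biSup (f := fun i => MeasurableSpace.comap (X (i + 1)) inferInstance) hkn
    · refine iSup₂_le fun i hi => ?_
      have hmem : i + 1 ∈ Set.Icc 1 n := by
        have : i < n := hi; simp only [Set.mem_Icc]; omega
      exact le_biSup (f := fun k => MeasurableSpace.comap (X k) inferInstance) hmem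
  have hIndepn : ∀ n, Indep (ℱ n) (MeasurableSpace.comap (X (n + 1)) inferInstance) ℙ := by
    intro n
    have h1 : iIndep (fun i => MeasurableSpace.comap (X (i + 1)) inferInstance) ℙ :=
      hindep.iIndep
    have h2 := indep_iSup_of_disjoint (fun i => (hmeas (i + 1)).comap_le) h1
      (S := Set.Iio n) (T := {n}) (by simp)
    rw [← hFeq n] at h2
    simpa [iSup_singleton] using h2
  -- expectation of e^{iX_{n+1}}
  have hIdint : ∀ n, ∫ ω, Complex.exp (Complex.I * (X (n + 1) ω : ℂ)) ∂ℙ = z := by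
    intro n
    have hid := ((hident n).comp
      (u := fun x : ℝ => Complex.exp (Complex.I * (x : ℂ)))
      (Complex.measurable_exp.comp (measurable_const.mul Complex.measurable_ofReal))).integral_eq
    rw [hzdef]
    simpa [Function.comp] using hid
  -- integrability of increment factor
  have hVint : ∀ n, Integrable (fun ω => Complex.exp (Complex.I * (X (n + 1) ω : ℂ)) - z) ℙ := by
    intro n
    exact ((hbdd _ 1 (hXc (n + 1)) (fun ω => le_of_eq (hnorm1 _))).sub (integrable_const z))
  -- conditional expectation of the increment is zero
  have hcondD : ∀ n, (ℙ[(fun ω => Complex.exp (Complex.I * (S n ω : ℂ)) *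
      (Complex.exp (Complex.I * (X (n + 1) ω : ℂ)) - z)) | ℱ n]) =ᵐ[ℙ] 0 := by
    intro n
    have hDmeas : Measurable (fun ω => Complex.exp (Complex.I * (S n ω : ℂ)) *
        (Complex.exp (Complex.I * (X (n + 1) ω : ℂ)) - z)) :=
      (heSamb n).mul ((hXc (n + 1)).sub measurable_const)
    have hDbd : ∀ ω, ‖Complex.exp (Complex.I * (S n ω : ℂ)) *
        (Complex.exp (Complex.I * (X (n + 1) ω : ℂ)) - z)‖ ≤ 1 + ‖z‖ := by
      intro ω
      rw [norm_mul, hnorm1, one_mul]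
      calc ‖Complex.exp (Complex.I * (X (n + 1) ω : ℂ)) - z‖
          ≤ ‖Complex.exp (Complex.I * (X (n + 1) ω : ℂ))‖ + ‖z‖ := norm_sub_le _ _
        _ = 1 + ‖z‖ := by rw [hnorm1]
    have hDint : Integrable (fun ω => Complex.exp (Complex.I * (S n ω : ℂ)) *
        (Complex.exp (Complex.I * (X (n + 1) ω : ℂ)) - z)) ℙ := hbdd _ _ hDmeas hDbd
    refine Filter.EventuallyEq.symm (ae_eq_condExp_of_forall_setIntegral_eq (ℱ.le n) hDint
      (fun s _ _ => (integrable_zero _ _ _).integrableOn) ?_ ?_)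
    · intro s hs _
      have hs' : MeasurableSet s := ℱ.le n s hs
      have hrw : ∫ ω in s, (Complex.exp (Complex.I * (S n ω : ℂ)) *
          (Complex.exp (Complex.I * (X (n + 1) ω : ℂ)) - z)) ∂ℙ
          = ∫ ω, (s.indicator (fun ω => Complex.exp (Complex.I * (S n ω : ℂ))) ω) *
            (Complex.exp (Complex.I * (X (n + 1) ω : ℂ)) - z) ∂ℙ := by
        rw [← integral_indicator hs']
        congr 1
        funext ω
        by_cases hω : ω ∈ s <;> simp [hω]
      have hUmeasF : Measurable[ℱ n]
          (s.indicator (fun ω => Complex.exp (Complex.I * (S n ω : ℂ)))) :=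
        (heSF n n le_rfl).indicator hs
      have hVmeasC : Measurable[MeasurableSpace.comap (X (n + 1)) inferInstance]
          (fun ω => Complex.exp (Complex.I * (X (n + 1) ω : ℂ)) - z) := by
        have hXm : Measurable[MeasurableSpace.comap (X (n + 1)) inferInstance] (X (n + 1)) :=
          Measurable.of_comap_le le_rfl
        exact (Complex.measurable_exp.comp
          (measurable_const.mul (Complex.measurable_ofReal.comp hXm))).sub measurable_const
      have hUV : IndepFun
          (s.indicator (fun ω => Complex.exp (Complex.I * (S n ω : ℂ))))
          (fun ω => Complex.exp (Complex.I * (X (n + 1) ω : ℂ)) - z) ℙ := by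
        rw [IndepFun_iff_Indep]
        exact indep_of_indep_of_le_right
          (indep_of_indep_of_le_left (hIndepn n) hUmeasF.comap_le) hVmeasC.comap_le
      have hUint : Integrable
          (s.indicator (fun ω => Complex.exp (Complex.I * (S n ω : ℂ)))) ℙ := by
        refine hbdd _ 1 ((heSamb n).indicator hs') ?_
        intro ω
        by_cases hω : ω ∈ s <;> simp [hω, hnorm1]
      have hVz : ∫ ω, (Complex.exp (Complex.I * (X (n + 1) ω : ℂ)) - z) ∂ℙ = 0 := by
        rw [integral_sub (hbdd _ 1 (hXc (n + 1)) (fun ω => le_of_eq (hnorm1 _)))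
          (integrable_const z), hIdint n, integral_const]
        simp
      rw [hrw, aux_integral_mul hUV hUint (hVint n), hVz, mul_zero]
      simp
    · exact stronglyMeasurable_const.aestronglyMeasurable
  -- one-step martingale property
  have hstep : ∀ n, (ℙ[M (n + 1) | ℱ n]) =ᵐ[ℙ] M n := by
    intro n
    have hadd : M (n + 1) = M n + fun ω => Complex.exp (Complex.I * (S n ω : ℂ)) *
        (Complex.exp (Complex.I * (X (n + 1) ω : ℂ)) - z) := by
      funext ω; exact hDM n ω
    have hDmeas : Measurable (fun ω => Complex.exp (Complex.I * (S n ω : ℂ)) *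
        (Complex.exp (Complex.I * (X (n + 1) ω : ℂ)) - z)) :=
      (heSamb n).mul ((hXc (n + 1)).sub measurable_const)
    have hDbd : ∀ ω, ‖Complex.exp (Complex.I * (S n ω : ℂ)) *
        (Complex.exp (Complex.I * (X (n + 1) ω : ℂ)) - z)‖ ≤ 1 + ‖z‖ := by
      intro ω
      rw [norm_mul, hnorm1, one_mul]
      calc ‖Complex.exp (Complex.I * (X (n + 1) ω : ℂ)) - z‖
          ≤ ‖Complex.exp (Complex.I * (X (n + 1) ω : ℂ))‖ + ‖z‖ := norm_sub_le _ _
        _ = 1 + ‖z‖ := by rw [hnorm1]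
    have hDint : Integrable (fun ω => Complex.exp (Complex.I * (S n ω : ℂ)) *
        (Complex.exp (Complex.I * (X (n + 1) ω : ℂ)) - z)) ℙ := hbdd _ _ hDmeas hDbd
    have h1 : (ℙ[M (n + 1) | ℱ n]) =ᵐ[ℙ]
        (ℙ[M n | ℱ n]) + (ℙ[(fun ω => Complex.exp (Complex.I * (S n ω : ℂ)) *
          (Complex.exp (Complex.I * (X (n + 1) ω : ℂ)) - z)) | ℱ n]) := by
      rw [hadd]
      exact condExp_add (hMint n) hDint _
    have h2 : (ℙ[M n | ℱ n]) = M n :=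
      condExp_of_stronglyMeasurable (ℱ.le n) ((hMF n).stronglyMeasurable) (hMint n)
    refine h1.trans ?_
    rw [h2]
    filter_upwards [hcondD n] with ω hω
    simp only [Pi.add_apply, hω, Pi.zero_apply, add_zero]
  -- the martingale property
  have hmart : Martingale M ℱ ℙ := by
    refine ⟨fun n => (hMF n).stronglyMeasurable, ?_⟩
    intro i j hij
    induction j, hij using Nat.le_induction with
    | base =>
      rw [condExp_of_stronglyMeasurable (ℱ.le i) ((hMF i).stronglyMeasurable) (hMint i)]
    | succ k hk ih =>
      have h1 : (ℙ[M (k + 1) | ℱ i]) =ᵐ[ℙ] (ℙ[(ℙ[M (k + 1) | ℱ k]) | ℱ i]) :=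
        (condExp_condExp_of_le (ℱ.mono hk) (ℱ.le k)).symm
      exact h1.trans ((condExp_congr_ae (hstep k)).trans ih)
  refine ⟨hmart, ?_⟩
  intro N hN
  induction N, hN using Nat.le_induction with
  | base =>
    intro ω
    rw [show Finset.Icc 1 1 = {1} from Finset.Icc_self 1, Finset.sum_singleton,
      hM 1 le_rfl ω]
    norm_num [hZ0 ω]
  | succ N hN ih =>
    intro ω
    rw [Finset.sum_Icc_succ_top (by omega : 1 ≤ N + 1)]
    have e1 : ∀ k ∈ Finset.Icc 1 N, z ^ (N + 1 - k) * M k ω = z * (z ^ (N - k) * M k ω) := by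
      intro k hk
      have hkN : k ≤ N := (Finset.mem_Icc.mp hk).2
      rw [show N + 1 - k = (N - k) + 1 by omega, pow_succ]
      ring
    rw [Finset.sum_congr rfl e1, ← Finset.mul_sum, ← ih ω, hM (N + 1) (by omega) ω]
    norm_num
end

section
/- Let (X_k)_{k≥1} be i.i.d. nonnegative random variables with E[X_1^{-α} 1{X_1 ≤ 1}] < ∞ for some α ∈ (0,1/2), and S_n = X_1 + ⋯ + X_n. Then for every p > 0: (i) E[S_n^{-p}] < ∞ for every n > p/α, and (ii) limsup_{n→∞} n^p · E[S_n^{-p}] ≤ (E[X_1])^{-p}, where the right-hand side is interpreted as 0 when E[X_1] = ∞. In particular there exist C and n₀ with E[S_n^{-p}] ≤ C·n^{-p} for all n ≥ n₀. -/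
open MeasureTheory ProbabilityTheory Filter Complex Topology ENNReal

section AuxStmt6

variable {Ω : Type*} [MeasureSpace Ω] [IsProbabilityMeasure (ℙ : Measure Ω)]

lemma auxA (f : ℕ → Ω → ℝ≥0∞) (hf : ∀ i, Measurable (f i))
    (hind : iIndepFun f ℙ) (s : Finset ℕ) :
    ∫⁻ ω, ∏ i ∈ s, f i ω ∂ℙ = ∏ i ∈ s, ∫⁻ ω, f i ω ∂ℙ := by
  induction s using Finset.cons_induction with
  | empty => simp
  | cons i s hi ih =>
    have hprodmeas : Measurable (fun ω => ∏ j ∈ s, f j ω) := by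
      exact Finset.measurable_prod s (fun j _ => hf j)
    have hIndep : IndepFun (f i) (fun ω => ∏ j ∈ s, f j ω) ℙ := by
      have := (hind.indepFun_finsetProd_of_notMem hf hi).symm
      convert this using 1
      ext ω
      simp [Finset.prod_apply]
    rw [Finset.prod_cons, ← ih,
      ← lintegral_mul_eq_lintegral_mul_lintegral_of_indepFun (hf i) hprodmeas hIndep]
    simp_rw [Finset.prod_cons]
    rfl

lemma auxB (X : ℕ → Ω → ℝ) (hmeas : ∀ k, Measurable (X k))
    (hindep : iIndepFun (fun k => X (k + 1)) ℙ)
    (hident : ∀ k, IdentDistrib (X (k + 1)) (X 1) ℙ ℙ)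
    (g : ℝ → ℝ≥0∞) (hg : Measurable g) (n : ℕ) :
    ∫⁻ ω, ∏ k ∈ Finset.Icc 1 n, g (X k ω) ∂ℙ = (∫⁻ ω, g (X 1 ω) ∂ℙ) ^ n := by
  have h1 : ∀ ω : Ω, ∏ k ∈ Finset.Icc 1 n, g (X k ω)
      = ∏ j ∈ Finset.range n, g (X (j + 1) ω) := by
    intro ω
    rw [← Finset.Ico_add_one_right_eq_Icc, Finset.prod_Ico_eq_prod_range]
    simp [Nat.add_comm]
  simp_rw [h1]
  have hindep' : iIndepFun (fun j => fun ω => g (X (j + 1) ω)) ℙ :=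
    hindep.comp (fun _ => g) (fun _ => hg)
  rw [auxA (fun j ω => g (X (j + 1) ω)) (fun j => hg.comp (hmeas (j + 1))) hindep']
  have h2 : ∀ j : ℕ, ∫⁻ ω, g (X (j + 1) ω) ∂ℙ = ∫⁻ ω, g (X 1 ω) ∂ℙ := fun j =>
    ((hident j).comp hg).lintegral_eq
  simp [h2, Finset.prod_const]

lemma auxC (X1 : Ω → ℝ) (hm : Measurable X1) (α : ℝ) (hα : 0 < α)
    (hneg : ∫⁻ ω in {ω | X1 ω ≤ 1}, (ENNReal.ofReal (X1 ω)) ^ (-α) ∂ℙ < ⊤)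
    (β : ℝ) (hβ0 : 0 < β) (hβ : β ≤ α) :
    ∫⁻ ω, (ENNReal.ofReal (X1 ω)) ^ (-β) ∂ℙ < ⊤ := by
  have hs : MeasurableSet {ω | X1 ω ≤ 1} := measurableSet_le hm measurable_const
  rw [← lintegral_add_compl _ hs]
  have h1 : ∫⁻ ω in {ω | X1 ω ≤ 1}, (ENNReal.ofReal (X1 ω)) ^ (-β) ∂ℙ
      ≤ ∫⁻ ω in {ω | X1 ω ≤ 1}, (ENNReal.ofReal (X1 ω)) ^ (-α) ∂ℙ := by
    refine setLIntegral_mono (by fun_prop) ?_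
    intro ω hω
    exact ENNReal.rpow_le_rpow_of_exponent_ge (ENNReal.ofReal_le_one.2 hω)
      (by linarith)
  have h2 : ∫⁻ ω in {ω | X1 ω ≤ 1}ᶜ, (ENNReal.ofReal (X1 ω)) ^ (-β) ∂ℙ
      ≤ ∫⁻ _ω in {ω | X1 ω ≤ 1}ᶜ, 1 ∂ℙ := by
    refine setLIntegral_mono measurable_const ?_
    intro ω hω
    simp only [Set.mem_compl_iff, Set.mem_setOf_eq, not_le] at hω
    have h1x : (1 : ℝ≥0∞) ≤ ENNReal.ofReal (X1 ω) := by
      rw [← ENNReal.ofReal_one]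
      exact ENNReal.ofReal_le_ofReal hω.le
    rw [ENNReal.rpow_neg]
    refine ENNReal.inv_le_one.2 ?_
    exact ENNReal.one_le_rpow h1x hβ0
  have h2' : ∫⁻ _ω in {ω | X1 ω ≤ 1}ᶜ, (1:ℝ≥0∞) ∂ℙ ≤ 1 := by
    simp only [lintegral_const, one_mul, Measure.restrict_apply MeasurableSet.univ,
      Set.univ_inter]
    exact prob_le_one
  exact ENNReal.add_lt_top.2 ⟨lt_of_le_of_lt h1 hneg,
    lt_of_le_of_lt (h2.trans h2') ENNReal.one_lt_top⟩

lemma auxPW (n : ℕ) (hn : 1 ≤ n) (z : ℕ → ℝ) (hz : ∀ k, 0 ≤ z k) (q : ℝ) (hq : 0 < q) :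
    (ENNReal.ofReal (∑ k ∈ Finset.Icc 1 n, z k)) ^ (-q)
      ≤ ∏ k ∈ Finset.Icc 1 n, (ENNReal.ofReal (z k)) ^ (-(q / n)) := by
  have hqn : -(q / n) < 0 := by
    have : (0:ℝ) < n := by exact_mod_cast hn
    have : 0 < q / n := div_pos hq this
    linarith
  by_cases hex : ∃ j ∈ Finset.Icc 1 n, z j = 0
  · obtain ⟨j, hj, hzj⟩ := hex
    have htop : ∏ k ∈ Finset.Icc 1 n, (ENNReal.ofReal (z k)) ^ (-(q / n)) = ⊤ := by
      rw [← Finset.mul_prod_erase _ _ hj, hzj]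
      simp only [ENNReal.ofReal_zero]
      rw [ENNReal.zero_rpow_of_neg hqn]
      refine ENNReal.top_mul ?_
      rw [Finset.prod_ne_zero_iff]
      intro i _
      simp only [ne_eq, ENNReal.rpow_eq_zero_iff, not_or]
      constructor
      · rintro ⟨h0, hpos⟩; linarith
      · rintro ⟨htop', _⟩; exact ENNReal.ofReal_ne_top htop'
    rw [htop]; exact le_top
  · push_neg at hex
    have hzpos : ∀ k ∈ Finset.Icc 1 n, 0 < z k := fun k hk =>
      lt_of_le_of_ne (hz k) (Ne.symm (hex k hk))
    have hcard : (Finset.Icc 1 n).card = n := by simp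
    have hamgm : ∏ k ∈ Finset.Icc 1 n, z k ^ ((n:ℝ)⁻¹)
        ≤ ∑ k ∈ Finset.Icc 1 n, z k := by
      have h := Real.geom_mean_le_arith_mean_weighted (Finset.Icc 1 n)
        (fun _ => (n:ℝ)⁻¹) z (fun i _ => by positivity)
        (by
          rw [Finset.sum_const, hcard, nsmul_eq_mul]
          field_simp)
        (fun i _ => hz i)
      refine h.trans ?_
      refine Finset.sum_le_sum fun i _ => ?_
      have hn1 : (n:ℝ)⁻¹ ≤ 1 := by
        apply inv_le_one_of_one_le₀
        exact_mod_cast hn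
      nlinarith [hz i]
    -- pass to ℝ≥0∞
    have hA : ENNReal.ofReal (∏ k ∈ Finset.Icc 1 n, z k ^ ((n:ℝ)⁻¹))
        ≤ ENNReal.ofReal (∑ k ∈ Finset.Icc 1 n, z k) := ENNReal.ofReal_le_ofReal hamgm
    have hanti : ∀ a b : ℝ≥0∞, a ≤ b → b ^ (-q) ≤ a ^ (-q) := by
      intro a b hab
      rw [ENNReal.rpow_neg, ENNReal.rpow_neg]
      exact ENNReal.inv_le_inv.2 (ENNReal.rpow_le_rpow hab hq.le)
    refine le_trans (hanti _ _ hA) (le_of_eq ?_)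
    rw [ENNReal.ofReal_prod_of_nonneg (fun i _ => Real.rpow_nonneg (hz i) _)]
    have hfact : ∀ i ∈ Finset.Icc 1 n, ENNReal.ofReal (z i ^ ((n:ℝ)⁻¹))
        = (ENNReal.ofReal (z i)) ^ ((n:ℝ)⁻¹) := fun i _ =>
      (ENNReal.ofReal_rpow_of_nonneg (hz i) (by positivity)).symm
    rw [Finset.prod_congr rfl hfact]
    rw [← ENNReal.prod_rpow_of_ne_top
      (fun i _ => ENNReal.rpow_ne_top_of_nonneg (by positivity) ENNReal.ofReal_ne_top)]
    refine Finset.prod_congr rfl fun i _ => ?_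
    rw [← ENNReal.rpow_mul]
    congr 1
    field_simp

lemma auxExp (u : ℝ) (hu : 0 ≤ u) : Real.exp (-u) ≤ 1 - u + u ^ 2 := by
  have hmul : Real.exp (-u) * Real.exp u = 1 := by
    rw [← Real.exp_add]; simp
  have h1 : u + 1 ≤ Real.exp u := Real.add_one_le_exp u
  have h2 : 0 < Real.exp u := Real.exp_pos u
  have h3 : 0 < Real.exp (-u) := Real.exp_pos (-u)
  nlinarith [mul_nonneg (mul_nonneg hu hu) hu, sq_nonneg u, sq_nonneg (u - 1)]

lemma auxTrunc {Ω : Type*} [MeasureSpace Ω] [IsProbabilityMeasure (ℙ : Measure Ω)]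
    (X1 : Ω → ℝ) (hm : Measurable X1) :
    (⨆ R : ℕ, ∫⁻ ω, ENNReal.ofReal (min (X1 ω) R) ∂ℙ) = ∫⁻ ω, ENNReal.ofReal (X1 ω) ∂ℙ := by
  have hkey : ∀ ω, (⨆ R : ℕ, ENNReal.ofReal (min (X1 ω) R)) = ENNReal.ofReal (X1 ω) := by
    intro ω
    apply le_antisymm
    · exact iSup_le fun R => ENNReal.ofReal_le_ofReal (min_le_left _ _)
    · have h : ENNReal.ofReal (X1 ω) = ENNReal.ofReal (min (X1 ω) (⌈X1 ω⌉₊ : ℕ)) := by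
        rw [min_eq_left (Nat.le_ceil _)]
      rw [h]
      exact le_iSup (fun R : ℕ => ENNReal.ofReal (min (X1 ω) R)) _
  have hmono : Monotone (fun (R : ℕ) (ω : Ω) => ENNReal.ofReal (min (X1 ω) R)) := by
    intro R R' hRR' ω
    exact ENNReal.ofReal_le_ofReal (min_le_min le_rfl (by exact_mod_cast hRR'))
  calc (⨆ R : ℕ, ∫⁻ ω, ENNReal.ofReal (min (X1 ω) R) ∂ℙ)
      = ∫⁻ ω, ⨆ R : ℕ, ENNReal.ofReal (min (X1 ω) R) ∂ℙ :=
        (lintegral_iSup (fun R => by fun_prop) hmono).symm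
    _ = ∫⁻ ω, ENNReal.ofReal (X1 ω) ∂ℙ := by
        congr 1; ext ω; exact hkey ω

lemma auxD (X : ℕ → Ω → ℝ) (hmeas : ∀ k, Measurable (X k))
    (hindep : iIndepFun (fun k => X (k + 1)) ℙ)
    (hident : ∀ k, IdentDistrib (X (k + 1)) (X 1) ℙ ℙ)
    (hnonneg : ∀ k ω, 0 ≤ X k ω)
    (S : ℕ → Ω → ℝ) (hS : ∀ n ω, S n ω = ∑ k ∈ Finset.Icc 1 n, X k ω)
    (α : ℝ) (hα : 0 < α)
    (hneg : ∫⁻ ω in {ω | X 1 ω ≤ 1}, (ENNReal.ofReal (X 1 ω)) ^ (-α) ∂ℙ < ⊤)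
    (q : ℝ) (hq : 0 < q) (n : ℕ) (hn : q / α < n) :
    ∫⁻ ω, (ENNReal.ofReal (S n ω)) ^ (-q) ∂ℙ < ⊤ := by
  have hn0 : 0 < n := by
    rcases Nat.eq_zero_or_pos n with h | h
    · exfalso
      rw [h] at hn
      norm_cast at hn
      exact absurd hn (not_lt.2 (div_nonneg hq.le hα.le))
    · exact h
  have hnR : (0:ℝ) < n := by exact_mod_cast hn0
  have hβ0 : 0 < q / n := div_pos hq hnR
  have hβα : q / (n:ℝ) < α := by
    rw [div_lt_iff₀ hα] at hn
    rw [div_lt_iff₀ hnR]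
    linarith
  have hpw : ∀ ω, (ENNReal.ofReal (S n ω)) ^ (-q)
      ≤ ∏ k ∈ Finset.Icc 1 n, (ENNReal.ofReal (X k ω)) ^ (-(q / n)) := by
    intro ω
    rw [hS n ω]
    exact auxPW n hn0 (fun k => X k ω) (fun k => hnonneg k ω) q hq
  have hg : Measurable (fun x : ℝ => (ENNReal.ofReal x) ^ (-(q / (n:ℝ)))) := by fun_prop
  calc ∫⁻ ω, (ENNReal.ofReal (S n ω)) ^ (-q) ∂ℙ
      ≤ ∫⁻ ω, ∏ k ∈ Finset.Icc 1 n, (ENNReal.ofReal (X k ω)) ^ (-(q / n)) ∂ℙ :=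
        lintegral_mono hpw
    _ = (∫⁻ ω, (ENNReal.ofReal (X 1 ω)) ^ (-(q / (n:ℝ))) ∂ℙ) ^ n :=
        auxB X hmeas hindep hident _ hg n
    _ < ⊤ := ENNReal.pow_lt_top (auxC (X 1) (hmeas 1) α hα hneg _ hβ0 hβα.le)

lemma auxE (X : ℕ → Ω → ℝ) (hmeas : ∀ k, Measurable (X k))
    (hindep : iIndepFun (fun k => X (k + 1)) ℙ)
    (hident : ∀ k, IdentDistrib (X (k + 1)) (X 1) ℙ ℙ)
    (hnonneg : ∀ k ω, 0 ≤ X k ω)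
    (S : ℕ → Ω → ℝ) (hS : ∀ n ω, S n ω = ∑ k ∈ Finset.Icc 1 n, X k ω)
    (c : ℝ) (hc0 : 0 < c)
    (hc : ENNReal.ofReal c < ∫⁻ ω, ENNReal.ofReal (X 1 ω) ∂ℙ) :
    ∃ ρ : ℝ≥0∞, ρ < 1 ∧ ∀ n : ℕ, ℙ {ω | S n ω ≤ c * n} ≤ ρ ^ n := by
  rw [← auxTrunc (X 1) (hmeas 1), lt_iSup_iff] at hc
  obtain ⟨R, hR⟩ := hc
  set B := ∫⁻ ω, ENNReal.ofReal (min (X 1 ω) R) ∂ℙ with hB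
  have hBle : B ≤ ENNReal.ofReal R := by
    calc B ≤ ∫⁻ _ω, ENNReal.ofReal (R:ℝ) ∂ℙ :=
          lintegral_mono fun ω => ENNReal.ofReal_le_ofReal (min_le_right _ _)
      _ = ENNReal.ofReal R := by simp
  have hBtop : B ≠ ⊤ := (hBle.trans_lt ENNReal.ofReal_lt_top).ne
  set c' := B.toReal with hc'def
  have hBof : B = ENNReal.ofReal c' := (ENNReal.ofReal_toReal hBtop).symm
  have hcc' : c < c' := by
    rw [hBof] at hR
    exact (ENNReal.ofReal_lt_ofReal_iff_of_nonneg hc0.le).1 hR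
  set D : ℝ := (R:ℝ) + 1 with hD
  have hRD : (R:ℝ) ≤ D := by simp [hD]
  have hD1 : (1:ℝ) ≤ D := by
    have h0 : (0:ℝ) ≤ R := Nat.cast_nonneg R
    rw [hD]; linarith
  set t := min ((c' - c) / (2 * D ^ 2)) 1 with ht
  have ht0 : 0 < t := lt_min (div_pos (by linarith) (by positivity)) one_pos
  have h2D : (0:ℝ) < 2 * D ^ 2 := by positivity
  have h1 : t * (2 * D ^ 2) ≤ c' - c := (le_div_iff₀ h2D).1 (min_le_left _ _)
  clear_value t c' D
  have htD : t ^ 2 * D ^ 2 ≤ t * (c' - c) / 2 := by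
    nlinarith [mul_le_mul_of_nonneg_left h1 ht0.le]
  set ρ₀ := Real.exp (t * c + t ^ 2 * D ^ 2 - t * c') with hρ₀
  have hρ₀1 : ρ₀ < 1 := by
    rw [hρ₀, ← Real.exp_zero]
    apply Real.exp_lt_exp.2
    nlinarith [htD, mul_pos ht0 (by linarith : (0:ℝ) < c' - c)]
  set Φ := ∫⁻ ω, ENNReal.ofReal (Real.exp (-t * X 1 ω)) ∂ℙ with hΦ
  have hΦ1 : Φ ≤ 1 := by
    calc Φ ≤ ∫⁻ _ω, 1 ∂ℙ := by
          refine lintegral_mono fun ω => ?_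
          rw [← ENNReal.ofReal_one]
          apply ENNReal.ofReal_le_ofReal
          rw [← Real.exp_zero]
          apply Real.exp_le_exp.2
          nlinarith [hnonneg 1 ω, ht0.le]
      _ = 1 := by simp
  have hΦtop : Φ ≠ ⊤ := (hΦ1.trans_lt ENNReal.one_lt_top).ne
  have hkey : Φ + ENNReal.ofReal t * B ≤ 1 + ENNReal.ofReal (t ^ 2 * D ^ 2) := by
    have hpt : ∀ ω, ENNReal.ofReal (Real.exp (-t * X 1 ω))
        + ENNReal.ofReal t * ENNReal.ofReal (min (X 1 ω) R)
        ≤ 1 + ENNReal.ofReal (t ^ 2 * D ^ 2) := by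
      intro ω
      have hx : 0 ≤ X 1 ω := hnonneg 1 ω
      set x := X 1 ω
      set m := min x (R:ℝ) with hm
      have hm0 : 0 ≤ m := le_min hx (Nat.cast_nonneg R)
      have hmD : m ≤ D := le_trans (min_le_right _ _) hRD
      have hreal : Real.exp (-t * x) + t * m ≤ 1 + t ^ 2 * D ^ 2 := by
        have h1 : Real.exp (-t * x) ≤ Real.exp (-(t * m)) := by
          apply Real.exp_le_exp.2
          have : m ≤ x := min_le_left _ _
          nlinarith [ht0.le]
        have h2 : Real.exp (-(t * m)) ≤ 1 - t * m + (t * m) ^ 2 := auxExp _ (by positivity)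
        have h3 : (t * m) ^ 2 ≤ t ^ 2 * D ^ 2 := by
          nlinarith [mul_le_mul_of_nonneg_left (mul_self_le_mul_self hm0 hmD) (sq_nonneg t)]
        linarith
      calc ENNReal.ofReal (Real.exp (-t * x)) + ENNReal.ofReal t * ENNReal.ofReal m
          = ENNReal.ofReal (Real.exp (-t * x) + t * m) := by
            rw [← ENNReal.ofReal_mul ht0.le,
              ← ENNReal.ofReal_add (Real.exp_pos _).le (by positivity)]
        _ ≤ ENNReal.ofReal (1 + t ^ 2 * D ^ 2) := ENNReal.ofReal_le_ofReal hreal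
        _ = 1 + ENNReal.ofReal (t ^ 2 * D ^ 2) := by
            rw [ENNReal.ofReal_add one_pos.le (by positivity), ENNReal.ofReal_one]
    calc Φ + ENNReal.ofReal t * B
        = ∫⁻ ω, (ENNReal.ofReal (Real.exp (-t * X 1 ω))
            + ENNReal.ofReal t * ENNReal.ofReal (min (X 1 ω) R)) ∂ℙ := by
          rw [lintegral_add_left (by fun_prop), lintegral_const_mul _ (by fun_prop)]
      _ ≤ ∫⁻ _ω, (1 + ENNReal.ofReal (t ^ 2 * D ^ 2)) ∂ℙ := lintegral_mono hpt
      _ = 1 + ENNReal.ofReal (t ^ 2 * D ^ 2) := by simp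
  have hc'pos : (0:ℝ) < c' := hc0.trans hcc'
  have hΦreal : Φ.toReal + t * c' ≤ 1 + t ^ 2 * D ^ 2 := by
    rw [hBof, ← ENNReal.ofReal_mul ht0.le] at hkey
    have hfin : (1 : ℝ≥0∞) + ENNReal.ofReal (t ^ 2 * D ^ 2) ≠ ⊤ := by
      exact ENNReal.add_ne_top.2 ⟨ENNReal.one_ne_top, ENNReal.ofReal_ne_top⟩
    have h := ENNReal.toReal_mono hfin hkey
    rw [ENNReal.toReal_add hΦtop ENNReal.ofReal_ne_top,
      ENNReal.toReal_add ENNReal.one_ne_top ENNReal.ofReal_ne_top,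
      ENNReal.toReal_ofReal (mul_nonneg ht0.le hc'pos.le), ENNReal.toReal_ofReal (by positivity),
      ENNReal.toReal_one] at h
    exact h
  have hρbound : Real.exp (t * c) * Φ.toReal ≤ ρ₀ := by
    have hΦle : Φ.toReal ≤ Real.exp (t ^ 2 * D ^ 2 - t * c') := by
      have h4 : Φ.toReal ≤ 1 + (t ^ 2 * D ^ 2 - t * c') := by linarith
      refine h4.trans ?_
      linarith [Real.add_one_le_exp (t ^ 2 * D ^ 2 - t * c')]
    calc Real.exp (t * c) * Φ.toReal
        ≤ Real.exp (t * c) * Real.exp (t ^ 2 * D ^ 2 - t * c') :=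
          mul_le_mul_of_nonneg_left hΦle (Real.exp_pos _).le
      _ = ρ₀ := by rw [← Real.exp_add, hρ₀]; congr 1; ring
  refine ⟨ENNReal.ofReal ρ₀, ENNReal.ofReal_lt_one.2 hρ₀1, fun n => ?_⟩
  have hSmeas : Measurable (S n) := by
    have h : S n = fun ω => ∑ k ∈ Finset.Icc 1 n, X k ω := funext (hS n)
    rw [h]
    exact Finset.measurable_sum _ fun k _ => hmeas k
  set f := fun ω => ENNReal.ofReal (Real.exp (-t * S n ω)) with hf
  have hfm : Measurable f := by fun_prop
  set ε := ENNReal.ofReal (Real.exp (-(t * (c * n)))) with hε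
  have hsub : {ω | S n ω ≤ c * n} ⊆ {ω | ε ≤ f ω} := by
    intro ω hω
    simp only [Set.mem_setOf_eq] at hω ⊢
    apply ENNReal.ofReal_le_ofReal
    apply Real.exp_le_exp.2
    nlinarith [ht0.le]
  have hmarkov := mul_meas_ge_le_lintegral₀ (μ := ℙ) hfm.aemeasurable ε
  have hfint : ∫⁻ ω, f ω ∂ℙ = Φ ^ n := by
    have hfeq : ∀ ω, f ω = ∏ k ∈ Finset.Icc 1 n, ENNReal.ofReal (Real.exp (-t * X k ω)) := by
      intro ω
      rw [← ENNReal.ofReal_prod_of_nonneg (fun i _ => (Real.exp_pos _).le), ← Real.exp_sum]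
      simp only [hf]
      rw [hS n ω, Finset.mul_sum]
    simp_rw [hfeq]
    exact auxB X hmeas hindep hident (fun x => ENNReal.ofReal (Real.exp (-t * x))) (by fun_prop) n
  rw [hfint] at hmarkov
  have hε0 : ε ≠ 0 := by
    simp only [hε, ne_eq, ENNReal.ofReal_eq_zero, not_le]
    exact Real.exp_pos _
  have hεtop : ε ≠ ⊤ := ENNReal.ofReal_ne_top
  have hP : ℙ {ω | S n ω ≤ c * n} ≤ ε⁻¹ * Φ ^ n := by
    refine (measure_mono hsub).trans ?_
    calc ℙ {ω | ε ≤ f ω} = ε⁻¹ * ε * ℙ {ω | ε ≤ f ω} := by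
          rw [ENNReal.inv_mul_cancel hε0 hεtop, one_mul]
      _ = ε⁻¹ * (ε * ℙ {ω | ε ≤ f ω}) := mul_assoc _ _ _
      _ ≤ ε⁻¹ * Φ ^ n := mul_le_mul_right hmarkov _
  have hinv : ε⁻¹ = ENNReal.ofReal (Real.exp (t * (c * n))) := by
    rw [hε, Real.exp_neg, ENNReal.ofReal_inv_of_pos (Real.exp_pos _), inv_inv]
  rw [hinv] at hP
  have hexp : Real.exp (t * (c * n)) = Real.exp (t * c) ^ n := by
    have h : t * (c * n) = (n : ℝ) * (t * c) := by ring
    rw [h, Real.exp_nat_mul]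
  refine hP.trans ?_
  rw [hexp, ENNReal.ofReal_pow (Real.exp_pos _).le, ← mul_pow]
  refine pow_le_pow_left' ?_ n
  have heq : ENNReal.ofReal (Real.exp (t * c)) * Φ
      = ENNReal.ofReal (Real.exp (t * c) * Φ.toReal) := by
    rw [ENNReal.ofReal_mul (Real.exp_pos _).le, ENNReal.ofReal_toReal hΦtop]
  rw [heq]
  exact ENNReal.ofReal_le_ofReal hρbound

lemma auxMu (X1 : Ω → ℝ) (hm : Measurable X1) (hnn : ∀ ω, 0 ≤ X1 ω) (α : ℝ) (hα : 0 < α)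
    (hneg : ∫⁻ ω in {ω | X1 ω ≤ 1}, (ENNReal.ofReal (X1 ω)) ^ (-α) ∂ℙ < ⊤) :
    0 < ∫⁻ ω, ENNReal.ofReal (X1 ω) ∂ℙ := by
  rcases eq_zero_or_pos (∫⁻ ω, ENNReal.ofReal (X1 ω) ∂ℙ) with h | h
  · exfalso
    have hae : ∀ᵐ ω ∂ℙ, ENNReal.ofReal (X1 ω) = 0 := (lintegral_eq_zero_iff (by fun_prop)).1 h
    have hae0 : ∀ᵐ ω ∂ℙ, X1 ω = 0 := by
      filter_upwards [hae] with ω hω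
      have := ENNReal.ofReal_eq_zero.1 hω
      linarith [hnn ω]
    have haes : ∀ᵐ ω ∂((ℙ : Measure Ω).restrict {ω | X1 ω ≤ 1}), (ENNReal.ofReal (X1 ω)) ^ (-α) = ⊤ := by
      refine ae_restrict_of_ae ?_
      filter_upwards [hae0] with ω hω
      rw [hω, ENNReal.ofReal_zero, ENNReal.zero_rpow_of_neg (by linarith)]
    have htop : ∫⁻ ω in {ω | X1 ω ≤ 1}, (ENNReal.ofReal (X1 ω)) ^ (-α) ∂ℙ = ⊤ := by
      rw [lintegral_congr_ae haes, lintegral_const]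
      have hone : ℙ {ω | X1 ω ≤ 1} = 1 := by
        have hsub' : {ω | X1 ω ≤ 1} =ᵐ[ℙ] Set.univ := by
          rw [Filter.eventuallyEq_univ]
          filter_upwards [hae0] with ω hω
          simp [Set.mem_setOf_eq, hω]
        rw [measure_congr hsub', measure_univ]
      rw [Measure.restrict_apply_univ, hone, mul_one]
    rw [htop] at hneg
    exact lt_irrefl _ hneg
  · exact h

end AuxStmt6

/-- If `E[X_1^{-α}; X_1 ≤ 1] < ∞` for some `α ∈ (0,1/2)`, then for every
`p > 0`: (i) `E[S_n^{-p}] < ∞` for `n > p/α`; (ii) `limsup_n n^p E[S_n^{-p}] ≤ (E X_1)^{-p}`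
(interpreted as `0` when `E X_1 = ∞`); in particular `E[S_n^{-p}] ≤ C n^{-p}` eventually.
Here expectations of nonnegative extended quantities are lower integrals, with
`0^{-p} = ∞` and `∞^{-p} = 0` in `ℝ≥0∞`. -/
theorem stmt6
    {Ω : Type*} [MeasureSpace Ω] [IsProbabilityMeasure (ℙ : Measure Ω)]
    (X : ℕ → Ω → ℝ)
    (hmeas : ∀ k, Measurable (X k))
    (hindep : iIndepFun (fun k => X (k + 1)) ℙ)
    (hident : ∀ k, IdentDistrib (X (k + 1)) (X 1) ℙ ℙ)
    (hnonneg : ∀ k ω, 0 ≤ X k ω)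
    (S : ℕ → Ω → ℝ)
    (hS : ∀ n ω, S n ω = ∑ k ∈ Finset.Icc 1 n, X k ω)
    (α : ℝ) (hα : 0 < α) (hα' : α < 1 / 2)
    (hneg : ∫⁻ ω in {ω | X 1 ω ≤ 1}, (ENNReal.ofReal (X 1 ω)) ^ (-α) ∂ℙ < ⊤)
    (p : ℝ) (hp : 0 < p) :
    (∀ n : ℕ, p / α < n → ∫⁻ ω, (ENNReal.ofReal (S n ω)) ^ (-p) ∂ℙ < ⊤) ∧
    (Filter.limsup
        (fun n : ℕ => (n : ℝ≥0∞) ^ p * ∫⁻ ω, (ENNReal.ofReal (S n ω)) ^ (-p) ∂ℙ)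
        atTop ≤ (∫⁻ ω, ENNReal.ofReal (X 1 ω) ∂ℙ) ^ (-p)) ∧
    (∃ C : ℝ, ∃ n₀ : ℕ, ∀ n : ℕ, n₀ ≤ n →
      ∫⁻ ω, (ENNReal.ofReal (S n ω)) ^ (-p) ∂ℙ ≤ ENNReal.ofReal C * (n : ℝ≥0∞) ^ (-p)) := by
  have hSmeas : ∀ n, Measurable (S n) := by
    intro n
    have h : S n = fun ω => ∑ k ∈ Finset.Icc 1 n, X k ω := funext (hS n)
    rw [h]
    exact Finset.measurable_sum _ fun k _ => hmeas k
  set μ1 := ∫⁻ ω, ENNReal.ofReal (X 1 ω) ∂ℙ with hμ1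
  have hμpos : 0 < μ1 := auxMu (X 1) (hmeas 1) (hnonneg 1) α hα hneg
  have parti : ∀ n : ℕ, p / α < n → ∫⁻ ω, (ENNReal.ofReal (S n ω)) ^ (-p) ∂ℙ < ⊤ :=
    fun n hn => auxD X hmeas hindep hident hnonneg S hS α hα hneg p hp n hn
  -- limsup bound for a fixed c
  have hlimc : ∀ c : ℝ, 0 < c → ENNReal.ofReal c < μ1 →
      Filter.limsup
        (fun n : ℕ => (n : ℝ≥0∞) ^ p * ∫⁻ ω, (ENNReal.ofReal (S n ω)) ^ (-p) ∂ℙ)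
        atTop ≤ (ENNReal.ofReal c) ^ (-p) := by
    intro c hc0 hcμ
    obtain ⟨ρ, hρ1, hρ⟩ := auxE X hmeas hindep hident hnonneg S hS c hc0 hcμ
    set m₀ : ℕ := ⌈2 * p / α⌉₊ + 1 with hm₀def
    have hm₀gt : 2 * p / α < m₀ := by
      refine lt_of_le_of_lt (Nat.le_ceil _) ?_
      exact_mod_cast Nat.lt_succ_self _
    set K := ∫⁻ ω, (ENNReal.ofReal (S m₀ ω)) ^ (-(2 * p)) ∂ℙ with hKdef
    have hKfin : K < ⊤ :=
      auxD X hmeas hindep hident hnonneg S hS α hα hneg (2 * p) (by linarith) m₀ hm₀gt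
    have hmono2 : ∀ n, m₀ ≤ n → ∫⁻ ω, (ENNReal.ofReal (S n ω)) ^ (-(2 * p)) ∂ℙ ≤ K := by
      intro n hn
      refine lintegral_mono fun ω => ?_
      have hSS : S m₀ ω ≤ S n ω := by
        rw [hS, hS]
        exact Finset.sum_le_sum_of_subset_of_nonneg
          (Finset.Icc_subset_Icc le_rfl hn) (fun k _ _ => hnonneg k ω)
      rw [ENNReal.rpow_neg, ENNReal.rpow_neg]
      exact ENNReal.inv_le_inv.2
        (ENNReal.rpow_le_rpow (ENNReal.ofReal_le_ofReal hSS) (by linarith))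
    set σ := ρ ^ ((2:ℝ)⁻¹) with hσdef
    have hσ1 : σ < 1 := ENNReal.rpow_lt_one hρ1 (by norm_num)
    have hσtop : σ ≠ ⊤ := ENNReal.rpow_ne_top_of_nonneg (by norm_num) (hρ1.trans ENNReal.one_lt_top).ne
    have hKr : K ^ ((2:ℝ)⁻¹) ≠ ⊤ := ENNReal.rpow_ne_top_of_nonneg (by norm_num) hKfin.ne
    -- the main eventual bound
    have hbound : ∀ n : ℕ, m₀ ≤ n → 1 ≤ n →
        (n : ℝ≥0∞) ^ p * ∫⁻ ω, (ENNReal.ofReal (S n ω)) ^ (-p) ∂ℙ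
          ≤ (ENNReal.ofReal c) ^ (-p) + (n : ℝ≥0∞) ^ p * (K ^ ((2:ℝ)⁻¹) * σ ^ n) := by
      intro n hm hn1
      have hnpos : (0:ℝ≥0∞) < (n : ℝ≥0∞) := by exact_mod_cast Nat.pos_of_ne_zero (by omega)
      have hnp0 : ((n : ℝ≥0∞)) ^ p ≠ 0 := by
        simp [ENNReal.rpow_eq_zero_iff, hnpos.ne', ENNReal.natCast_ne_top]
      have hnptop : ((n : ℝ≥0∞)) ^ p ≠ ⊤ :=
        ENNReal.rpow_ne_top_of_nonneg hp.le (ENNReal.natCast_ne_top n)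
      set A := {ω | S n ω ≤ c * n} with hAdef
      have hAmeas : MeasurableSet A := measurableSet_le (hSmeas n) measurable_const
      have hsplit : ∫⁻ ω, (ENNReal.ofReal (S n ω)) ^ (-p) ∂ℙ
          = (∫⁻ ω in A, (ENNReal.ofReal (S n ω)) ^ (-p) ∂ℙ)
            + ∫⁻ ω in Aᶜ, (ENNReal.ofReal (S n ω)) ^ (-p) ∂ℙ :=
        (lintegral_add_compl _ hAmeas).symm
      have hcompl : ∫⁻ ω in Aᶜ, (ENNReal.ofReal (S n ω)) ^ (-p) ∂ℙ
          ≤ (ENNReal.ofReal c) ^ (-p) * (((n:ℝ≥0∞)) ^ p)⁻¹ := by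
        have hptw : ∀ ω ∈ Aᶜ,
            (ENNReal.ofReal (S n ω)) ^ (-p) ≤ (ENNReal.ofReal (c * n)) ^ (-p) := by
          intro ω hω
          simp only [hAdef, Set.mem_compl_iff, Set.mem_setOf_eq, not_le] at hω
          rw [ENNReal.rpow_neg, ENNReal.rpow_neg]
          exact ENNReal.inv_le_inv.2
            (ENNReal.rpow_le_rpow (ENNReal.ofReal_le_ofReal hω.le) hp.le)
        calc ∫⁻ ω in Aᶜ, (ENNReal.ofReal (S n ω)) ^ (-p) ∂ℙ
            ≤ ∫⁻ _ω in Aᶜ, (ENNReal.ofReal (c * n)) ^ (-p) ∂ℙ :=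
              setLIntegral_mono measurable_const hptw
          _ = (ENNReal.ofReal (c * n)) ^ (-p) * ℙ Aᶜ := setLIntegral_const _ _
          _ ≤ (ENNReal.ofReal (c * n)) ^ (-p) * 1 := mul_le_mul_right prob_le_one _
          _ = (ENNReal.ofReal c) ^ (-p) * (((n:ℝ≥0∞)) ^ p)⁻¹ := by
              rw [mul_one, ENNReal.ofReal_mul hc0.le,
                ENNReal.mul_rpow_of_ne_top ENNReal.ofReal_ne_top ENNReal.ofReal_ne_top,
                ENNReal.ofReal_natCast, ENNReal.rpow_neg ((n:ℝ≥0∞)) p]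
      have hCS : ∫⁻ ω in A, (ENNReal.ofReal (S n ω)) ^ (-p) ∂ℙ
          ≤ K ^ ((2:ℝ)⁻¹) * σ ^ n := by
        set g := A.indicator (fun _ : Ω => (1:ℝ≥0∞)) with hgdef
        have hgmeas : Measurable g := measurable_one.indicator hAmeas
        have heq : ∫⁻ ω in A, (ENNReal.ofReal (S n ω)) ^ (-p) ∂ℙ
            = ∫⁻ ω, ((fun ω => (ENNReal.ofReal (S n ω)) ^ (-p)) * g) ω ∂ℙ := by
          rw [← lintegral_indicator hAmeas]
          congr 1
          ext ω
          by_cases hω : ω ∈ A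
          · simp [hgdef, hω]
          · simp [hgdef, hω]
        rw [heq]
        have hfmeas : Measurable (fun ω => (ENNReal.ofReal (S n ω)) ^ (-p)) := by
          have := hSmeas n
          fun_prop
        have hHolder := ENNReal.lintegral_mul_le_Lp_mul_Lq (ℙ : Measure Ω)
          (p := 2) (q := 2) Real.HolderConjugate.two_two
          hfmeas.aemeasurable hgmeas.aemeasurable
        refine hHolder.trans ?_
        have hf2 : ∫⁻ ω, ((ENNReal.ofReal (S n ω)) ^ (-p)) ^ (2:ℝ) ∂ℙ
            = ∫⁻ ω, (ENNReal.ofReal (S n ω)) ^ (-(2 * p)) ∂ℙ := by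
          congr 1
          ext ω
          rw [← ENNReal.rpow_mul]
          norm_num
          ring_nf
        have hg2 : ∫⁻ ω, (g ω) ^ (2:ℝ) ∂ℙ = ℙ A := by
          have : ∀ ω, (g ω) ^ (2:ℝ) = g ω := by
            intro ω
            by_cases hω : ω ∈ A
            · simp [hgdef, hω]
            · simp [hgdef, hω, ENNReal.zero_rpow_of_pos]
          simp_rw [this, hgdef]
          rw [lintegral_indicator hAmeas]
          simp
        rw [hf2, hg2]
        have hKle : (∫⁻ ω, (ENNReal.ofReal (S n ω)) ^ (-(2 * p)) ∂ℙ) ^ ((1:ℝ)/2)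
            ≤ K ^ ((2:ℝ)⁻¹) := by
          rw [one_div]
          exact ENNReal.rpow_le_rpow (hmono2 n hm) (by norm_num)
        have hPAle : (ℙ A) ^ ((1:ℝ)/2) ≤ σ ^ n := by
          rw [one_div]
          refine le_trans (ENNReal.rpow_le_rpow (hρ n) (by norm_num)) (le_of_eq ?_)
          rw [hσdef, ← ENNReal.rpow_natCast ρ n, ← ENNReal.rpow_natCast (ρ ^ (2:ℝ)⁻¹) n,
            ← ENNReal.rpow_mul, ← ENNReal.rpow_mul]
          congr 1
          ring
        exact mul_le_mul' hKle hPAle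
      calc (n : ℝ≥0∞) ^ p * ∫⁻ ω, (ENNReal.ofReal (S n ω)) ^ (-p) ∂ℙ
          = (n : ℝ≥0∞) ^ p * ((∫⁻ ω in A, (ENNReal.ofReal (S n ω)) ^ (-p) ∂ℙ)
              + ∫⁻ ω in Aᶜ, (ENNReal.ofReal (S n ω)) ^ (-p) ∂ℙ) := by rw [← hsplit]
        _ ≤ (n : ℝ≥0∞) ^ p * ((K ^ ((2:ℝ)⁻¹) * σ ^ n)
              + (ENNReal.ofReal c) ^ (-p) * (((n:ℝ≥0∞)) ^ p)⁻¹) :=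
            mul_le_mul_right (add_le_add hCS hcompl) _
        _ = (ENNReal.ofReal c) ^ (-p) * ((n : ℝ≥0∞) ^ p * (((n:ℝ≥0∞)) ^ p)⁻¹)
              + (n : ℝ≥0∞) ^ p * (K ^ ((2:ℝ)⁻¹) * σ ^ n) := by ring
        _ = (ENNReal.ofReal c) ^ (-p) + (n : ℝ≥0∞) ^ p * (K ^ ((2:ℝ)⁻¹) * σ ^ n) := by
            rw [ENNReal.mul_inv_cancel hnp0 hnptop, mul_one]
    -- conclude via limsup
    refine ENNReal.le_of_forall_pos_le_add fun ε hε _hfin => ?_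
    -- tail tendsto 0
    set k := ⌈p⌉₊ with hkdef
    have hσr1 : σ.toReal < 1 := by
      have := (ENNReal.toReal_lt_toReal hσtop ENNReal.one_ne_top).2 hσ1
      simpa using this
    have hσr0 : 0 ≤ σ.toReal := ENNReal.toReal_nonneg
    have htail0 : Tendsto (fun n : ℕ => K ^ ((2:ℝ)⁻¹)
        * ENNReal.ofReal ((n:ℝ) ^ k * σ.toReal ^ n)) atTop (𝓝 0) := by
      have h1 : Tendsto (fun n : ℕ => (n:ℝ) ^ k * σ.toReal ^ n) atTop (𝓝 0) :=
        tendsto_pow_const_mul_const_pow_of_lt_one k hσr0 hσr1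
      have h2 : Tendsto (fun n : ℕ => ENNReal.ofReal ((n:ℝ) ^ k * σ.toReal ^ n)) atTop (𝓝 0) := by
        have := (ENNReal.continuous_ofReal.tendsto 0).comp h1
        rw [ENNReal.ofReal_zero] at this
        exact this
      have h3 := ENNReal.Tendsto.const_mul h2 (Or.inr hKr)
      simpa using h3
    have htailev : ∀ᶠ n : ℕ in atTop,
        (n : ℝ≥0∞) ^ p * (K ^ ((2:ℝ)⁻¹) * σ ^ n)
          ≤ K ^ ((2:ℝ)⁻¹) * ENNReal.ofReal ((n:ℝ) ^ k * σ.toReal ^ n) := by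
      filter_upwards [eventually_ge_atTop 1] with n hn1
      have hone : (1:ℝ≥0∞) ≤ (n : ℝ≥0∞) := by exact_mod_cast hn1
      have hnp : (n : ℝ≥0∞) ^ p ≤ (n : ℝ≥0∞) ^ (k:ℝ) :=
        ENNReal.rpow_le_rpow_of_exponent_le hone (Nat.le_ceil p)
      have hσof : σ = ENNReal.ofReal σ.toReal := (ENNReal.ofReal_toReal hσtop).symm
      calc (n : ℝ≥0∞) ^ p * (K ^ ((2:ℝ)⁻¹) * σ ^ n)
          ≤ (n : ℝ≥0∞) ^ (k:ℝ) * (K ^ ((2:ℝ)⁻¹) * σ ^ n) :=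
            mul_le_mul_left hnp _
        _ = K ^ ((2:ℝ)⁻¹) * ((n : ℝ≥0∞) ^ (k:ℝ) * σ ^ n) := by ring
        _ = K ^ ((2:ℝ)⁻¹) * ENNReal.ofReal ((n:ℝ) ^ k * σ.toReal ^ n) := by
            congr 1
            rw [ENNReal.ofReal_mul (by positivity), ENNReal.ofReal_pow (Nat.cast_nonneg n),
              ENNReal.ofReal_natCast, ENNReal.ofReal_pow hσr0,
              ENNReal.ofReal_toReal hσtop, ENNReal.rpow_natCast]
    have hεev : ∀ᶠ n : ℕ in atTop,
        (n : ℝ≥0∞) ^ p * (K ^ ((2:ℝ)⁻¹) * σ ^ n) ≤ (ε : ℝ≥0∞) := by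
      have hlt := htail0.eventually_lt_const (show (0:ℝ≥0∞) < (ε : ℝ≥0∞) by exact_mod_cast hε)
      filter_upwards [htailev, hlt] with n h1 h2
      exact h1.trans h2.le
    have hev : ∀ᶠ n : ℕ in atTop,
        (n : ℝ≥0∞) ^ p * ∫⁻ ω, (ENNReal.ofReal (S n ω)) ^ (-p) ∂ℙ
          ≤ (ENNReal.ofReal c) ^ (-p) + (ε : ℝ≥0∞) := by
      filter_upwards [eventually_ge_atTop m₀, eventually_ge_atTop 1, hεev] with n h1 h2 h3
      exact (hbound n h1 h2).trans (add_le_add le_rfl h3)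
    exact Filter.limsup_le_of_le (by isBoundedDefault) hev
  have partii : Filter.limsup
      (fun n : ℕ => (n : ℝ≥0∞) ^ p * ∫⁻ ω, (ENNReal.ofReal (S n ω)) ^ (-p) ∂ℙ)
      atTop ≤ μ1 ^ (-p) := by
    rcases eq_top_or_lt_top μ1 with htop | hfin
    · rw [htop, ENNReal.top_rpow_of_neg (by linarith)]
      refine ENNReal.le_of_forall_pos_le_add fun ε hε _ => ?_
      rw [zero_add]
      have h1 : Tendsto (fun x : ℝ => x ^ (-p)) atTop (𝓝 0) := tendsto_rpow_neg_atTop hp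
      have h2 : ∀ᶠ x : ℝ in atTop, x ^ (-p) < (ε:ℝ) :=
        h1.eventually_lt_const (by exact_mod_cast hε)
      obtain ⟨x, hx1, hx2⟩ := (h2.and (eventually_ge_atTop 1)).exists
      refine le_trans (hlimc x (by linarith) (by rw [htop]; exact ENNReal.ofReal_lt_top)) ?_
      rw [ENNReal.ofReal_rpow_of_pos (by linarith)]
      calc ENNReal.ofReal (x ^ (-p)) ≤ ENNReal.ofReal (ε:ℝ) := ENNReal.ofReal_le_ofReal hx1.le
        _ = (ε : ℝ≥0∞) := ENNReal.ofReal_coe_nnreal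
    · set m := μ1.toReal with hmdef
      have hm0 : 0 < m := ENNReal.toReal_pos hμpos.ne' hfin.ne
      have hμof : μ1 = ENNReal.ofReal m := (ENNReal.ofReal_toReal hfin.ne).symm
      set cj : ℕ → ℝ := fun j => m * (1 - 1 / (j + 2)) with hcjdef
      have hj2 : ∀ j : ℕ, (0:ℝ) < (j:ℝ) + 2 := fun j => by positivity
      have hcjpos : ∀ j : ℕ, 0 < cj j := by
        intro j
        have h2 : 1 / ((j:ℝ) + 2) < 1 := by rw [div_lt_one (hj2 j)]; linarith
        have h1 : 0 < 1 - 1/((j:ℝ)+2) := by linarith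
        exact mul_pos hm0 h1
      have hcjlt : ∀ j : ℕ, cj j < m := by
        intro j
        have h3 : 0 < 1 / ((j:ℝ)+2) := by positivity
        simp only [hcjdef]
        nlinarith [mul_pos hm0 h3]
      have hcjμ : ∀ j : ℕ, ENNReal.ofReal (cj j) < μ1 := by
        intro j
        rw [hμof]
        exact (ENNReal.ofReal_lt_ofReal_iff hm0).2 (hcjlt j)
      have htend : Tendsto (fun j : ℕ => ENNReal.ofReal ((cj j) ^ (-p))) atTop
          (𝓝 (ENNReal.ofReal (m ^ (-p)))) := by
        have ha : Tendsto (fun j : ℕ => ((j:ℝ) + 2)) atTop atTop :=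
          tendsto_atTop_add_const_right _ 2 tendsto_natCast_atTop_atTop
        have h2 : Tendsto (fun j : ℕ => 1 / ((j:ℝ) + 2)) atTop (𝓝 0) := by
          simpa [one_div, Function.comp_def] using tendsto_inv_atTop_zero.comp ha
        have h3 : Tendsto (fun j : ℕ => 1 - 1/((j:ℝ)+2)) atTop (𝓝 1) := by
          simpa using tendsto_const_nhds.sub h2
        have h1 : Tendsto (fun j : ℕ => cj j) atTop (𝓝 m) := by
          simpa [hcjdef] using h3.const_mul m
        have hcont : ContinuousAt (fun x : ℝ => x ^ (-p)) m :=
          Real.continuousAt_rpow_const m (-p) (Or.inl hm0.ne')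
        exact (ENNReal.continuous_ofReal.tendsto _).comp (hcont.tendsto.comp h1)
      have hle : ∀ j : ℕ, Filter.limsup
          (fun n : ℕ => (n : ℝ≥0∞) ^ p * ∫⁻ ω, (ENNReal.ofReal (S n ω)) ^ (-p) ∂ℙ)
          atTop ≤ ENNReal.ofReal ((cj j) ^ (-p)) := by
        intro j
        refine le_trans (hlimc (cj j) (hcjpos j) (hcjμ j)) (le_of_eq ?_)
        rw [ENNReal.ofReal_rpow_of_pos (hcjpos j)]
      have hfinal := ge_of_tendsto htend (Filter.Eventually.of_forall hle)
      rw [hμof, ENNReal.ofReal_rpow_of_pos hm0]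
      exact hfinal
  have hLfin : μ1 ^ (-p) < ⊤ := by
    rw [ENNReal.rpow_neg, ENNReal.inv_lt_top]
    have h0 : μ1 ^ p ≠ 0 := by
      simp only [ne_eq, ENNReal.rpow_eq_zero_iff, not_or, not_and]
      exact ⟨fun h => absurd h hμpos.ne', fun _ => not_lt.2 hp.le⟩
    exact pos_iff_ne_zero.2 h0
  have hlt : Filter.limsup
      (fun n : ℕ => (n : ℝ≥0∞) ^ p * ∫⁻ ω, (ENNReal.ofReal (S n ω)) ^ (-p) ∂ℙ)
      atTop < μ1 ^ (-p) + 1 :=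
    lt_of_le_of_lt partii (ENNReal.lt_add_right hLfin.ne one_ne_zero)
  have hev := Filter.eventually_lt_of_limsup_lt hlt
  obtain ⟨n₀, hn₀⟩ := Filter.eventually_atTop.1 hev
  refine ⟨parti, partii, (μ1 ^ (-p) + 1).toReal, max n₀ 1, fun n hn => ?_⟩
  have hn1 : 1 ≤ n := le_trans (le_max_right _ _) hn
  have hnn₀ : n₀ ≤ n := le_trans (le_max_left _ _) hn
  have hu := (hn₀ n hnn₀).le
  have hnpos : (0:ℝ≥0∞) < (n : ℝ≥0∞) := by exact_mod_cast Nat.pos_of_ne_zero (by omega)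
  have hnp0 : ((n : ℝ≥0∞)) ^ p ≠ 0 := by
    simp [ENNReal.rpow_eq_zero_iff, hnpos.ne', ENNReal.natCast_ne_top]
  have hnptop : ((n : ℝ≥0∞)) ^ p ≠ ⊤ :=
    ENNReal.rpow_ne_top_of_nonneg hp.le (ENNReal.natCast_ne_top n)
  have hC : ENNReal.ofReal ((μ1 ^ (-p) + 1).toReal) = μ1 ^ (-p) + 1 :=
    ENNReal.ofReal_toReal (ENNReal.add_ne_top.2 ⟨hLfin.ne, ENNReal.one_ne_top⟩)
  calc ∫⁻ ω, (ENNReal.ofReal (S n ω)) ^ (-p) ∂ℙ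
      = (n : ℝ≥0∞) ^ (-p) * ((n : ℝ≥0∞) ^ p * ∫⁻ ω, (ENNReal.ofReal (S n ω)) ^ (-p) ∂ℙ) := by
        rw [← mul_assoc, ENNReal.rpow_neg, ENNReal.inv_mul_cancel hnp0 hnptop, one_mul]
    _ ≤ (n : ℝ≥0∞) ^ (-p) * (μ1 ^ (-p) + 1) := mul_le_mul_right hu _
    _ = ENNReal.ofReal ((μ1 ^ (-p) + 1).toReal) * (n : ℝ≥0∞) ^ (-p) := by
        rw [hC, mul_comm]
end

section
/- Let (X_k)_{k≥1} be i.i.d. nonnegative random variables and S_n = X_1 + ⋯ + X_n. Then for every p > 0 and n ≥ 1, with values in [0,∞]: E[S_n^{-p} · 1{max_{1≤k≤n} X_k ≤ 1}] ≤ n^{-p} · (E[X_1^{-p/n} · 1{X_1 ≤ 1}])^n. -/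
open MeasureTheory ProbabilityTheory Filter Complex Topology ENNReal

/-- Lintegral of a finite product of independent `ℝ≥0∞`-valued random variables. -/
lemma lintegral_prod_of_iIndepFun' {Ω : Type*} [MeasureSpace Ω]
    [IsProbabilityMeasure (ℙ : Measure Ω)]
    (Y : ℕ → Ω → ℝ≥0∞) (hY : ∀ i, Measurable (Y i))
    (hind : iIndepFun Y ℙ) (n : ℕ) :
    ∫⁻ ω, ∏ i ∈ Finset.range n, Y i ω ∂ℙ = ∏ i ∈ Finset.range n, ∫⁻ ω, Y i ω ∂ℙ := by
  induction n with
  | zero => simp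
  | succ n ih =>
    have hprod : Measurable (∏ i ∈ Finset.range n, Y i) := by
      have he : (∏ i ∈ Finset.range n, Y i) = fun ω => ∏ i ∈ Finset.range n, Y i ω := by
        funext ω; simp [Finset.prod_apply]
      rw [he]; exact Finset.measurable_prod _ fun i _ => hY i
    have hmul := ProbabilityTheory.lintegral_mul_eq_lintegral_mul_lintegral_of_indepFun
      hprod (hY n) (hind.indepFun_prod_range_succ hY n)
    calc ∫⁻ ω, ∏ i ∈ Finset.range (n + 1), Y i ω ∂ℙ
        = ∫⁻ ω, ((∏ i ∈ Finset.range n, Y i) * Y n) ω ∂ℙ := by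
          simp [Finset.prod_range_succ, Finset.prod_apply]
      _ = (∫⁻ ω, (∏ i ∈ Finset.range n, Y i) ω ∂ℙ) * ∫⁻ ω, Y n ω ∂ℙ := hmul
      _ = ∏ i ∈ Finset.range (n + 1), ∫⁻ ω, Y i ω ∂ℙ := by
          simp only [Finset.prod_apply]
          rw [ih, Finset.prod_range_succ]

/-- For i.i.d. nonnegative `(X_k)` and `S_n = X_1 + ⋯ + X_n`, for every
`p > 0` and `n ≥ 1` (values in `[0,∞]`, with `0^{-q} = ∞` in `ℝ≥0∞`):
`E[S_n^{-p}; max_{1≤k≤n} X_k ≤ 1] ≤ n^{-p} (E[X_1^{-p/n}; X_1 ≤ 1])^n`. -/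
theorem stmt7
    {Ω : Type*} [MeasureSpace Ω] [IsProbabilityMeasure (ℙ : Measure Ω)]
    (X : ℕ → Ω → ℝ)
    (hmeas : ∀ k, Measurable (X k))
    (hindep : iIndepFun (fun k => X (k + 1)) ℙ)
    (hident : ∀ k, IdentDistrib (X (k + 1)) (X 1) ℙ ℙ)
    (hnonneg : ∀ k ω, 0 ≤ X k ω)
    (S : ℕ → Ω → ℝ)
    (hS : ∀ n ω, S n ω = ∑ k ∈ Finset.Icc 1 n, X k ω)
    (p : ℝ) (hp : 0 < p) (n : ℕ) (hn : 1 ≤ n) :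
    ∫⁻ ω in {ω | ∀ k ∈ Finset.Icc 1 n, X k ω ≤ 1},
        (ENNReal.ofReal (S n ω)) ^ (-p) ∂ℙ
      ≤ (n : ℝ≥0∞) ^ (-p) *
        (∫⁻ ω in {ω | X 1 ω ≤ 1}, (ENNReal.ofReal (X 1 ω)) ^ (-(p / n)) ∂ℙ) ^ n := by
  have hn0 : (n : ℝ) ≠ 0 := by
    exact_mod_cast Nat.one_le_iff_ne_zero.mp hn
  have hnpos : (0 : ℝ) < n := by positivity
  have hq_neg : -(p / (n : ℝ)) < 0 := by
    have : 0 < p / (n : ℝ) := div_pos hp hnpos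
    linarith
  -- the function applied to each variable
  set g : ℝ → ℝ≥0∞ :=
    Set.indicator (Set.Iic 1) (fun x => ENNReal.ofReal x ^ (-(p / (n : ℝ)))) with hg
  have hgmeas : Measurable g :=
    (ENNReal.continuous_rpow_const.measurable.comp ENNReal.measurable_ofReal).indicator
      measurableSet_Iic
  set A : Set Ω := {ω | ∀ k ∈ Finset.Icc 1 n, X k ω ≤ 1} with hA_def
  have hA : MeasurableSet A := by
    have : A = ⋂ k ∈ Finset.Icc 1 n, {ω | X k ω ≤ 1} := by
      ext ω; simp [hA_def]
    rw [this]
    exact MeasurableSet.biInter (Finset.Icc 1 n).countable_toSet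
      fun k _ => measurableSet_le (hmeas k) measurable_const
  -- pointwise bound (holds everywhere)
  have hpt : ∀ ω, ENNReal.ofReal (S n ω) ^ (-p)
      ≤ (n : ℝ≥0∞) ^ (-p) * ∏ k ∈ Finset.Icc 1 n, ENNReal.ofReal (X k ω) ^ (-(p / (n : ℝ))) := by
    intro ω
    have hfac_ne_zero : ∀ k ∈ Finset.Icc 1 n,
        ENNReal.ofReal (X k ω) ^ (-(p / (n : ℝ))) ≠ 0 := by
      intro k _
      simp only [ne_eq, ENNReal.rpow_eq_zero_iff, not_or, not_and, not_lt]
      constructor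
      · intro _; linarith
      · intro h; exact absurd h ENNReal.ofReal_ne_top
    by_cases h0 : ∃ k ∈ Finset.Icc 1 n, X k ω = 0
    · -- RHS is infinite
      obtain ⟨k, hk, hk0⟩ := h0
      have hfac : ENNReal.ofReal (X k ω) ^ (-(p / (n : ℝ))) = ∞ := by
        rw [hk0]
        simp [ENNReal.zero_rpow_of_neg hq_neg]
      have hprod : ∏ j ∈ Finset.Icc 1 n, ENNReal.ofReal (X j ω) ^ (-(p / (n : ℝ))) = ∞ := by
        rw [← Finset.prod_erase_mul _ _ hk, hfac, ENNReal.mul_top]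
        exact Finset.prod_ne_zero_iff.mpr fun j hj =>
          hfac_ne_zero j (Finset.mem_of_mem_erase hj)
      rw [hprod, ENNReal.mul_top]
      · exact le_top
      · simp only [ne_eq, ENNReal.rpow_eq_zero_iff, not_or, not_and, not_lt]
        constructor
        · intro h; exact absurd h (by exact_mod_cast Nat.one_le_iff_ne_zero.mp hn)
        · intro h; exact absurd h (ENNReal.natCast_ne_top n)
    · -- all variables positive: use AM-GM
      push_neg at h0
      have hpos : ∀ k ∈ Finset.Icc 1 n, 0 < X k ω :=
        fun k hk => lt_of_le_of_ne (hnonneg k ω) (Ne.symm (h0 k hk))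
      -- AM-GM
      have hAMGM : ∏ k ∈ Finset.Icc 1 n, (X k ω) ^ ((1 : ℝ) / n)
          ≤ ∑ k ∈ Finset.Icc 1 n, (1 / (n : ℝ)) * X k ω := by
        apply Real.geom_mean_le_arith_mean_weighted
        · intro i _; positivity
        · rw [Finset.sum_const, Nat.card_Icc]
          simp only [Nat.add_sub_cancel, nsmul_eq_mul]
          field_simp
        · intro i hi; exact (hpos i hi).le
      have hAMGM' : (n : ℝ) * ∏ k ∈ Finset.Icc 1 n, (X k ω) ^ ((1 : ℝ) / n) ≤ S n ω := by
        rw [hS]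
        have : ∑ k ∈ Finset.Icc 1 n, (1 / (n : ℝ)) * X k ω
            = (1 / (n : ℝ)) * ∑ k ∈ Finset.Icc 1 n, X k ω := by
          rw [Finset.mul_sum]
        rw [this] at hAMGM
        calc (n : ℝ) * ∏ k ∈ Finset.Icc 1 n, (X k ω) ^ ((1 : ℝ) / n)
            ≤ (n : ℝ) * ((1 / (n : ℝ)) * ∑ k ∈ Finset.Icc 1 n, X k ω) := by
              apply mul_le_mul_of_nonneg_left hAMGM hnpos.le
          _ = ∑ k ∈ Finset.Icc 1 n, X k ω := by field_simp
      -- transfer to ENNReal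
      have h1 : ENNReal.ofReal ((n : ℝ) * ∏ k ∈ Finset.Icc 1 n, (X k ω) ^ ((1 : ℝ) / n))
          ≤ ENNReal.ofReal (S n ω) := ENNReal.ofReal_le_ofReal hAMGM'
      have h2 : ENNReal.ofReal (S n ω) ^ (-p)
          ≤ ENNReal.ofReal ((n : ℝ) * ∏ k ∈ Finset.Icc 1 n, (X k ω) ^ ((1 : ℝ) / n)) ^ (-p) := by
        rw [ENNReal.rpow_neg, ENNReal.rpow_neg]
        exact ENNReal.inv_le_inv.mpr (ENNReal.rpow_le_rpow h1 hp.le)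
      refine h2.trans_eq ?_
      -- compute the RHS
      have hofR : ENNReal.ofReal ((n : ℝ) * ∏ k ∈ Finset.Icc 1 n, (X k ω) ^ ((1 : ℝ) / n))
          = (n : ℝ≥0∞) * ∏ k ∈ Finset.Icc 1 n, ENNReal.ofReal (X k ω) ^ ((1 : ℝ) / n) := by
        rw [ENNReal.ofReal_mul hnpos.le, ENNReal.ofReal_natCast,
          ENNReal.ofReal_prod_of_nonneg (fun k hk => Real.rpow_nonneg (hnonneg k ω) _)]
        congr 1
        apply Finset.prod_congr rfl
        intro k hk
        rw [← ENNReal.ofReal_rpow_of_nonneg (hnonneg k ω) (by positivity)]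
      rw [hofR]
      have hprod_ne_top : (∏ k ∈ Finset.Icc 1 n, ENNReal.ofReal (X k ω) ^ ((1 : ℝ) / n)) ≠ ∞ := by
        refine (ENNReal.prod_lt_top ?_).ne
        intro k _
        exact ENNReal.rpow_lt_top_of_nonneg (by positivity) ENNReal.ofReal_ne_top
      rw [ENNReal.mul_rpow_of_ne_top (ENNReal.natCast_ne_top n) hprod_ne_top]
      congr 1
      rw [← ENNReal.prod_rpow_of_ne_top
        (fun k _ => ENNReal.rpow_ne_top_of_nonneg (by positivity) ENNReal.ofReal_ne_top)]
      apply Finset.prod_congr rfl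
      intro k hk
      rw [← ENNReal.rpow_mul]
      congr 1
      field_simp
  -- the constant factor is finite
  have hconst_ne_top : ((n : ℝ≥0∞) ^ (-p)) ≠ ∞ := by
    simp only [ne_eq, ENNReal.rpow_eq_top_iff, not_or, not_and, not_lt]
    constructor
    · intro h; exact absurd h (by exact_mod_cast Nat.one_le_iff_ne_zero.mp hn)
    · intro h; exact absurd h (ENNReal.natCast_ne_top n)
  calc ∫⁻ ω in A, ENNReal.ofReal (S n ω) ^ (-p) ∂ℙ
      ≤ ∫⁻ ω in A,
          (n : ℝ≥0∞) ^ (-p) * ∏ k ∈ Finset.Icc 1 n,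
            ENNReal.ofReal (X k ω) ^ (-(p / (n : ℝ))) ∂ℙ :=
        setLIntegral_mono' hA fun ω _ => hpt ω
    _ = (n : ℝ≥0∞) ^ (-p) *
          ∫⁻ ω in A, ∏ k ∈ Finset.Icc 1 n, ENNReal.ofReal (X k ω) ^ (-(p / (n : ℝ))) ∂ℙ :=
        lintegral_const_mul' _ _ hconst_ne_top
    _ = (n : ℝ≥0∞) ^ (-p) * ∫⁻ ω, ∏ i ∈ Finset.range n, g (X (i + 1) ω) ∂ℙ := by
        congr 1
        rw [← lintegral_indicator hA]
        apply lintegral_congr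
        intro ω
        have : Set.indicator A
            (fun ω => ∏ k ∈ Finset.Icc 1 n, ENNReal.ofReal (X k ω) ^ (-(p / (n : ℝ)))) ω
            = ∏ k ∈ Finset.Icc 1 n, g (X k ω) := by
          by_cases hω : ω ∈ A
          · rw [Set.indicator_of_mem hω]
            apply Finset.prod_congr rfl
            intro k hk
            rw [hg, Set.indicator_of_mem (by exact hω k hk : X k ω ∈ Set.Iic 1)]
          · rw [Set.indicator_of_notMem hω]
            have h' : ¬ ∀ k ∈ Finset.Icc 1 n, X k ω ≤ 1 := hω
            push_neg at h'
            obtain ⟨k, hk, hk1⟩ := h'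
            symm
            apply Finset.prod_eq_zero hk
            rw [hg, Set.indicator_of_notMem (by simpa using hk1)]
        rw [this, ← Finset.Ico_add_one_right_eq_Icc, Finset.prod_Ico_eq_prod_range]
        simp [Nat.add_comm]
    _ = (n : ℝ≥0∞) ^ (-p) * ∏ i ∈ Finset.range n, ∫⁻ ω, g (X (i + 1) ω) ∂ℙ := by
        congr 1
        exact lintegral_prod_of_iIndepFun' _ (fun i => hgmeas.comp (hmeas (i + 1)))
          (hindep.comp (fun _ => g) (fun _ => hgmeas)) n
    _ = (n : ℝ≥0∞) ^ (-p) * (∫⁻ ω, g (X 1 ω) ∂ℙ) ^ n := by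
        congr 1
        have : ∀ i, ∫⁻ ω, g (X (i + 1) ω) ∂ℙ = ∫⁻ ω, g (X 1 ω) ∂ℙ := by
          intro i
          rw [← lintegral_map hgmeas (hmeas (i + 1)), (hident i).map_eq,
            lintegral_map hgmeas (hmeas 1)]
        rw [Finset.prod_congr rfl fun i _ => this i, Finset.prod_const, Finset.card_range]
    _ = (n : ℝ≥0∞) ^ (-p) *
          (∫⁻ ω in {ω | X 1 ω ≤ 1}, (ENNReal.ofReal (X 1 ω)) ^ (-(p / n)) ∂ℙ) ^ n := by
        congr 2
        rw [← lintegral_indicator (measurableSet_le (hmeas 1) measurable_const)]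
        apply lintegral_congr
        intro ω
        by_cases hω : X 1 ω ≤ 1
        · rw [hg, Set.indicator_of_mem (by simpa using hω : X 1 ω ∈ Set.Iic 1),
            Set.indicator_of_mem (by exact hω : ω ∈ {ω | X 1 ω ≤ 1})]
        · rw [hg, Set.indicator_of_notMem (by simpa using hω),
            Set.indicator_of_notMem (by exact hω : ω ∉ {ω | X 1 ω ≤ 1})]
end
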